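/- For t ∈ [0,T], σ > 0, β ≥ 0, let s(t)² = σ²((e^{2T−t}+e^t)/(e^{2T}+1))² + β² (e^{2T−t}+e^t)²(e^{2t}−1)/(2(e^{2T}+1)(e^{2T}+e^{2t})) and s₀(t)² = σ²((e^{2T−t}+e^t)/(e^{2T}+1))². Then the 1-Wasserstein distance between the one-dimensional Gaussians N(m, s(t)²) and N(m, s₀(t)²) satisfies W₁(N(m,s(t)²), N(m,s₀(t)²)) ≤ |s(t) − s₀(t)| · √(2/π) ≤ C β² for a constant C depending only on T and σ. -/

import Mathlib

open MeasureTheory ProbabilityTheory Real Set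
open Filter

/-- The 1-Wasserstein distance, defined as the infimum over couplings of the
expected distance. -/
noncomputable def W1 {E : Type*} [NormedAddCommGroup E] [MeasurableSpace E]
    (μ ν : Measure E) : ℝ :=
  sInf { c | ∃ cpl : Measure (E × E), cpl.map Prod.fst = μ ∧ cpl.map Prod.snd = ν ∧
    c = ∫ p, ‖p.1 - p.2‖ ∂cpl }

/-- Variance of the viscous population distribution in the closed-form LQ example. -/
noncomputable def sSq (T σ β t : ℝ) : ℝ :=
  σ ^ 2 * ((Real.exp (2 * T - t) + Real.exp t) / (Real.exp (2 * T) + 1)) ^ 2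
    + β ^ 2 * (Real.exp (2 * T - t) + Real.exp t) ^ 2 * (Real.exp (2 * t) - 1)
      / (2 * (Real.exp (2 * T) + 1) * (Real.exp (2 * T) + Real.exp (2 * t)))

/-- Variance of the inviscid population distribution in the closed-form LQ example. -/
noncomputable def s0Sq (T σ t : ℝ) : ℝ :=
  σ ^ 2 * ((Real.exp (2 * T - t) + Real.exp t) / (Real.exp (2 * T) + 1)) ^ 2

lemma int_Ioi : ∫ x in Ioi (0:ℝ), x * Real.exp (-x^2/2) = 1 := by
  have h := integral_Ioi_of_hasDerivAt_of_tendsto (f := fun x : ℝ => -Real.exp (-x^2/2))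
    (f' := fun x : ℝ => x * Real.exp (-x^2/2)) (a := 0) (m := 0)
    ?_ ?_ ?_ ?_
  · rw [h]; simp
  · exact (Continuous.neg (Real.continuous_exp.comp (by continuity))).continuousWithinAt
  · intro x _
    have : HasDerivAt (fun x : ℝ => -x^2/2) (-x) x := by
      have := (hasDerivAt_pow 2 x).neg.div_const 2
      exact this.congr_deriv (by norm_num; ring)
    have := (Real.hasDerivAt_exp (-x^2/2)).comp x this
    exact this.neg.congr_deriv (by ring)
  · have h2 : (0:ℝ) < 1/2 := by norm_num
    have := (integrable_mul_exp_neg_mul_sq h2).integrableOn (s := Ioi 0)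
    refine this.congr_fun (fun x _ => ?_) measurableSet_Ioi
    ring_nf
  · have : Tendsto (fun x : ℝ => -x^2/2) atTop atBot := by
      apply Filter.Tendsto.atBot_div_const (by norm_num)
      exact tendsto_neg_atBot_iff.mpr (tendsto_pow_atTop (by norm_num))
    have := (Real.tendsto_exp_atBot).comp this
    simpa using this.neg

lemma gauss_abs_moment : ∫ x, |x| ∂(gaussianReal 0 1) = Real.sqrt (2 / π) := by
  rw [gaussianReal_of_var_ne_zero 0 one_ne_zero]
  have hm : Measurable fun x => (gaussianPDFReal 0 1 x).toNNReal :=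
    (measurable_gaussianPDFReal 0 1).real_toNNReal
  rw [show (gaussianPDF 0 1) = fun x => (((fun x => (gaussianPDFReal 0 1 x).toNNReal) x : NNReal) : ENNReal) from rfl,
    integral_withDensity_eq_integral_smul hm]
  have hpdf : ∀ x : ℝ, (gaussianPDFReal 0 1 x).toNNReal • |x|
      = (Real.sqrt (2 * π))⁻¹ * (|x| * Real.exp (-x^2/2)) := by
    intro x
    rw [NNReal.smul_def, Real.coe_toNNReal _ (gaussianPDFReal_nonneg _ _ _)]
    simp [gaussianPDFReal]
    ring
  simp_rw [hpdf]
  rw [integral_const_mul]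
  have habs : (∫ x : ℝ, |x| * Real.exp (-x^2/2))
      = ∫ x : ℝ, (fun y => y * Real.exp (-y^2/2)) |x| := by
    congr 1; funext x; simp [sq_abs]
  rw [habs, integral_comp_abs (f := fun y => y * Real.exp (-y^2/2)), int_Ioi, mul_one]
  have hπ : (0:ℝ) < π := Real.pi_pos
  have h1 : Real.sqrt (2/π) * Real.sqrt (2*π) = 2 := by
    rw [← Real.sqrt_mul (by positivity)]
    rw [show (2/π) * (2*π) = 2^2 by field_simp]
    simp [Real.sqrt_sq]
  have h2 : Real.sqrt (2*π) ≠ 0 := by positivity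
  rw [inv_mul_eq_div, div_eq_iff h2]
  exact h1.symm

lemma W1_gauss_le (m a b : ℝ) :
    W1 (gaussianReal m ⟨a^2, sq_nonneg a⟩) (gaussianReal m ⟨b^2, sq_nonneg b⟩)
      ≤ |a - b| * Real.sqrt (2/π) := by
  set γ := gaussianReal 0 1 with hγ
  set φ : ℝ → ℝ × ℝ := fun x => (m + a*x, m + b*x) with hφdef
  have hφ : Measurable φ := by fun_prop
  have hbdd : BddBelow { c | ∃ cpl : Measure (ℝ × ℝ),
      cpl.map Prod.fst = gaussianReal m ⟨a^2, sq_nonneg a⟩ ∧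
      cpl.map Prod.snd = gaussianReal m ⟨b^2, sq_nonneg b⟩ ∧
      c = ∫ p, ‖p.1 - p.2‖ ∂cpl } := by
    refine ⟨0, fun c hc => ?_⟩
    obtain ⟨cpl, -, -, rfl⟩ := hc
    positivity
  have key : ∀ c : ℝ, (γ.map (fun x => m + c * x)) = gaussianReal m ⟨c^2, sq_nonneg c⟩ := by
    intro c
    have h1 : (fun x : ℝ => m + c * x) = (m + ·) ∘ (c * ·) := rfl
    rw [h1, ← Measure.map_map (by fun_prop) (by fun_prop), hγ,
      gaussianReal_map_const_mul c, gaussianReal_map_const_add m]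
    norm_num
    rfl
  have hfst : (γ.map φ).map Prod.fst = gaussianReal m ⟨a^2, sq_nonneg a⟩ := by
    rw [Measure.map_map measurable_fst hφ]; exact key a
  have hsnd : (γ.map φ).map Prod.snd = gaussianReal m ⟨b^2, sq_nonneg b⟩ := by
    rw [Measure.map_map measurable_snd hφ]; exact key b
  refine le_trans (csInf_le hbdd ⟨γ.map φ, hfst, hsnd, rfl⟩) ?_
  rw [integral_map (f := fun p : ℝ × ℝ => ‖p.1 - p.2‖) hφ.aemeasurable
    ((continuous_fst.sub continuous_snd).norm.aestronglyMeasurable)]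
  have : ∀ x : ℝ, ‖(φ x).1 - (φ x).2‖ = |a - b| * |x| := by
    intro x
    rw [hφdef]
    simp only [Real.norm_eq_abs, ← abs_mul]
    ring_nf
  simp_rw [this]
  rw [integral_const_mul, gauss_abs_moment]


set_option maxHeartbeats 1000000

/-- For the one-dimensional Gaussians of the LQ example,
`W₁(N(m, s(t)²), N(m, s₀(t)²)) ≤ |s(t) - s₀(t)| √(2/π) ≤ C β²` with `C = C(T, σ)`. -/
theorem gaussian_W1_vanishing_viscosity_rate
    (T σ : ℝ) (hT : 0 < T) (hσ : 0 < σ) :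
    ∃ C > (0:ℝ), ∀ (m β : ℝ), 0 ≤ β → ∀ t ∈ Icc (0:ℝ) T,
      W1 (gaussianReal m (Real.toNNReal (sSq T σ β t)))
          (gaussianReal m (Real.toNNReal (s0Sq T σ t)))
        ≤ |Real.sqrt (sSq T σ β t) - Real.sqrt (s0Sq T σ t)| * Real.sqrt (2 / π) ∧
      |Real.sqrt (sSq T σ β t) - Real.sqrt (s0Sq T σ t)| * Real.sqrt (2 / π)
        ≤ C * β ^ 2 := by
  refine ⟨4 * Real.exp (4*T) / σ, by positivity, ?_⟩
  intro m β hβ t ht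
  obtain ⟨ht0, htT⟩ := ht
  set E1 : ℝ := Real.exp (2 * T - t) + Real.exp t with hE1
  set D : ℝ := Real.exp (2 * T) + 1 with hD
  set P : ℝ := Real.exp (2 * T) + Real.exp (2 * t) with hP
  set A : ℝ := β ^ 2 * E1 ^ 2 * (Real.exp (2 * t) - 1) / (2 * D * P) with hA
  have hE1pos : 0 < E1 := by positivity
  have hDpos : 0 < D := by positivity
  have hPpos : 0 < P := by positivity
  have hexp1 : (1:ℝ) ≤ Real.exp (2 * t) := Real.one_le_exp (by linarith)
  have hAnn : 0 ≤ A := by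
    apply div_nonneg _ (by positivity)
    have : (0:ℝ) ≤ Real.exp (2 * t) - 1 := by linarith
    positivity
  have hs0 : s0Sq T σ t = σ ^ 2 * (E1 / D) ^ 2 := rfl
  have hsplit : sSq T σ β t = s0Sq T σ t + A := rfl
  have hs0pos : 0 < s0Sq T σ t := by rw [hs0]; positivity
  have hsspos : 0 < sSq T σ β t := by rw [hsplit]; linarith
  -- sqrt facts
  set u := Real.sqrt (s0Sq T σ t) with hu
  have hupos : 0 < u := Real.sqrt_pos.mpr hs0pos
  have hu2 : u ^ 2 = s0Sq T σ t := Real.sq_sqrt hs0pos.le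
  have hsqrtle : Real.sqrt (sSq T σ β t) ≤ u + A / u := by
    have h1 : sSq T σ β t ≤ (u + A / u) ^ 2 := by
      rw [hsplit, ← hu2]
      have hc : u * (A / u) = A := mul_div_cancel₀ A hupos.ne'
      nlinarith [sq_nonneg (A / u)]
    calc Real.sqrt (sSq T σ β t) ≤ Real.sqrt ((u + A / u) ^ 2) := Real.sqrt_le_sqrt h1
      _ = u + A / u := Real.sqrt_sq (by positivity)
  have hmono : u ≤ Real.sqrt (sSq T σ β t) :=
    Real.sqrt_le_sqrt (by rw [hsplit]; linarith)
  have habs : |Real.sqrt (sSq T σ β t) - u| ≤ A / u := by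
    rw [abs_of_nonneg (by linarith)]
    linarith
  -- bound A
  have hE1le : E1 ≤ 2 * Real.exp (2 * T) := by
    have h1 : Real.exp (2 * T - t) ≤ Real.exp (2 * T) := Real.exp_le_exp.mpr (by linarith)
    have h2 : Real.exp t ≤ Real.exp (2 * T) := Real.exp_le_exp.mpr (by linarith)
    rw [hE1]; linarith
  have hnum : β ^ 2 * E1 ^ 2 * (Real.exp (2 * t) - 1)
      ≤ β ^ 2 * (4 * Real.exp (2*T) ^ 2 * Real.exp (2 * T)) := by
    have h3 : Real.exp (2 * t) - 1 ≤ Real.exp (2 * T) := by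
      have := Real.exp_le_exp.mpr (show 2 * t ≤ 2 * T by linarith)
      linarith
    have hE1sq : E1 ^ 2 ≤ 4 * Real.exp (2*T) ^ 2 := by nlinarith
    have h4 : (0:ℝ) ≤ Real.exp (2 * t) - 1 := by linarith
    have := mul_le_mul (mul_le_mul_of_nonneg_left hE1sq (sq_nonneg β)) h3 h4 (by positivity)
    linarith [this]
  have hden : 2 * Real.exp (2*T) * Real.exp (2*T) ≤ 2 * D * P := by
    have h1 : Real.exp (2*T) ≤ D := by rw [hD]; linarith
    have h2 : Real.exp (2*T) ≤ P := by
      rw [hP]; linarith [Real.exp_pos (2*t)]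
    nlinarith [Real.exp_pos (2*T)]
  have hAle : A ≤ 2 * β ^ 2 * Real.exp (2 * T) := by
    rw [hA]
    have := div_le_div₀ (by positivity) hnum (by positivity) hden
    calc β ^ 2 * E1 ^ 2 * (Real.exp (2 * t) - 1) / (2 * D * P)
        ≤ β ^ 2 * (4 * Real.exp (2*T) ^ 2 * Real.exp (2 * T))
            / (2 * Real.exp (2*T) * Real.exp (2*T)) := this
      _ = 2 * β ^ 2 * Real.exp (2 * T) := by
          field_simp
          ring
  -- lower bound on u
  have hE1ge : (1:ℝ) ≤ E1 := by
    have h1 : (1:ℝ) ≤ Real.exp (2 * T - t) := Real.one_le_exp (by linarith)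
    have h2 : (0:ℝ) < Real.exp t := Real.exp_pos t
    rw [hE1]; linarith
  have hDle : D ≤ 2 * Real.exp (2 * T) := by
    have : (1:ℝ) ≤ Real.exp (2 * T) := Real.one_le_exp (by linarith)
    rw [hD]; linarith
  have huval : u = σ * (E1 / D) := by
    rw [hu, hs0, show σ ^ 2 * (E1 / D) ^ 2 = (σ * (E1 / D)) ^ 2 by ring,
      Real.sqrt_sq (by positivity)]
  have huge : σ / (2 * Real.exp (2 * T)) ≤ u := by
    rw [huval]
    rw [div_le_iff₀ (by positivity)]
    rw [show σ * (E1 / D) * (2 * Real.exp (2 * T)) = σ * (E1 * (2 * Real.exp (2 * T)) / D) by ring]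
    have h1 : D ≤ E1 * (2 * Real.exp (2 * T)) := by nlinarith [Real.exp_pos (2*T)]
    have h2 : (1:ℝ) ≤ E1 * (2 * Real.exp (2 * T)) / D := by
      rw [le_div_iff₀ hDpos]; linarith
    nlinarith
  have hfinal : A / u ≤ (4 * Real.exp (4*T) / σ) * β ^ 2 := by
    have h1 : A / u ≤ (2 * β ^ 2 * Real.exp (2 * T)) / (σ / (2 * Real.exp (2 * T))) :=
      div_le_div₀ (by positivity) hAle (by positivity) huge
    calc A / u ≤ _ := h1
      _ = (4 * Real.exp (2*T) * Real.exp (2*T) / σ) * β ^ 2 := by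
          field_simp; ring
      _ = (4 * Real.exp (4*T) / σ) * β ^ 2 := by
          rw [show (4:ℝ) * T = 2*T + 2*T by ring, Real.exp_add]; ring
  have hsqpi : Real.sqrt (2 / π) ≤ 1 := by
    rw [show (1:ℝ) = Real.sqrt 1 by simp]
    apply Real.sqrt_le_sqrt
    rw [div_le_one Real.pi_pos]
    exact Real.two_le_pi
  constructor
  · have hW := W1_gauss_le m (Real.sqrt (sSq T σ β t)) u
    have e1 : Real.toNNReal (sSq T σ β t)
        = ⟨(Real.sqrt (sSq T σ β t))^2, sq_nonneg _⟩ := by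
      ext
      rw [Real.coe_toNNReal _ hsspos.le]
      exact (Real.sq_sqrt hsspos.le).symm
    have e2 : Real.toNNReal (s0Sq T σ t) = ⟨u^2, sq_nonneg _⟩ := by
      ext
      rw [Real.coe_toNNReal _ hs0pos.le]
      exact hu2.symm
    rw [e1, e2]
    exact hW
  · calc |Real.sqrt (sSq T σ β t) - u| * Real.sqrt (2 / π)
        ≤ (A / u) * 1 := by
          apply mul_le_mul habs hsqpi (Real.sqrt_nonneg _) (by positivity)
      _ = A / u := mul_one _
      _ ≤ _ := hfinal
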